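/- arXiv:2307.01356 — 2 statements merged into one kernel-verified Lean document; each statement's English description precedes it below -/
import Mathlib

section
/- The $2\times 2$ matrix $A^{(1)} = \begin{pmatrix} \frac{1-2p}{1-p} & \frac{p}{1-p} \\ 1 & 0 \end{pmatrix}$, acting on $L^2(\{0,1\}, \mu_p)$, has the $p$-biased characters $1$ and $\chi_{\{1\}}(x) = \frac{x-p}{\sqrt{p(1-p)}}$ as eigenfunctions with eigenvalues $1$ and $-\frac{p}{1-p}$ respectively; moreover its $n$-fold tensor power $A^{(n)}$ satisfies $A^{(n)}_{S,T} = 0$ whenever $S \cap T \neq \emptyset$ (identifying $\{0,1\}^n$ with subsets of $[n]$). -/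
open Finset

/-- The Friedgut pseudo-disjointness matrix `A^{(1)}` on `{0,1}`, with rows/columns
indexed by `Bool` (`false ↔ ∅`, `true ↔ {1}`). -/
noncomputable def Amat (p : ℝ) : Bool → Bool → ℝ :=
  fun a b =>
    match a, b with
    | false, false => (1 - 2 * p) / (1 - p)
    | false, true => p / (1 - p)
    | true, false => 1
    | true, true => 0

/-- The `p`-biased character on one coordinate: `χ(x) = (x - p)/√(p(1-p))`. -/
noncomputable def chi1 (p : ℝ) : Bool → ℝ :=
  fun b => ((if b then 1 else 0) - p) / Real.sqrt (p * (1 - p))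

/-- `A^{(1)}` has the constant function `1` and the `p`-biased character `χ` as
eigenfunctions, with eigenvalues `1` and `-p/(1-p)` respectively; and its `n`-fold
tensor power vanishes on intersecting pairs. -/
theorem Amat_eigen_and_pseudo_disjoint (p : ℝ) (hp0 : 0 < p) (hp1 : p < 1) :
    (∀ a : Bool, ∑ b : Bool, Amat p a b * 1 = 1) ∧
    (∀ a : Bool, ∑ b : Bool, Amat p a b * chi1 p b = -(p / (1 - p)) * chi1 p a) ∧
    (∀ (n : ℕ) (x y : Fin n → Bool), (∃ i, x i = true ∧ y i = true) →
      ∏ i, Amat p (x i) (y i) = 0) := by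
  have h1 : (1 : ℝ) - p ≠ 0 := by linarith
  refine ⟨?_, ?_, ?_⟩
  · intro a
    cases a <;> simp [Fintype.sum_bool, Amat] <;> field_simp <;> ring
  · intro a
    obtain ⟨s, hs, hse⟩ : ∃ s : ℝ, s ≠ 0 ∧ Real.sqrt (p * (1 - p)) = s :=
      ⟨_, ne_of_gt (Real.sqrt_pos.2 (by nlinarith)), rfl⟩
    cases a <;> simp only [Fintype.sum_bool, Amat, chi1, if_true, if_false, Bool.false_eq_true, hse] <;>
      field_simp <;> ring
  · rintro n x y ⟨i, hx, hy⟩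
    apply Finset.prod_eq_zero (Finset.mem_univ i)
    rw [hx, hy]; rfl
end

section
/- Let $2 \leq k, n \in \mathbb{N}$ and set $p = \frac{\log n}{k}$ (assume $p \leq 1$). Then $(1 - (1-p)^k)^n \geq 1/4$; consequently, for any $\mathcal{A} \subseteq [k]^n$ with up-closed embedding $\mathcal{B} \subseteq \{0,1\}^{kn}$ as above, $\frac{|\mathcal{A}|}{k^n} \leq 4\,\mu_p(\mathcal{B})$. -/
open Finset

/-- The `p`-biased product measure on `({0,1}^k)^n`. -/
noncomputable def mupB (p : ℝ) {k n : ℕ} (x : Fin n → Fin k → Bool) : ℝ :=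
  ∏ i, ∏ j, if x i j then p else 1 - p

/-- The embedding `Ã` of `𝒜 ⊆ [k]^n` into `({0,1}^k)^n` by tuples of singletons. -/
def tildeEmb {k n : ℕ} (A : Finset (Fin n → Fin k)) : Set (Fin n → Fin k → Bool) :=
  {S | ∃ z ∈ A, ∀ i j, S i j = decide (j = z i)}

/-- The up-closure of a family in `({0,1}^k)^n` (coordinatewise). -/
def upClosure {k n : ℕ} (T : Set (Fin n → Fin k → Bool)) : Set (Fin n → Fin k → Bool) :=
  {x | ∃ y ∈ T, ∀ i j, y i j = true → x i j = true}

open Classical in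
/-- The `μ_p`-measure of a family in `({0,1}^k)^n`. -/
noncomputable def muSet (p : ℝ) {k n : ℕ} (B : Set (Fin n → Fin k → Bool)) : ℝ :=
  ∑ x, if x ∈ B then mupB p x else 0

/-! ### Auxiliary definitions -/

noncomputable def blockMu (p : ℝ) {k : ℕ} (v : Fin k → Bool) : ℝ :=
  ∏ j, if v j then p else 1 - p

def onesCt {k : ℕ} (v : Fin k → Bool) : ℕ := (univ.filter (fun j => v j = true)).card

noncomputable def blockW {k : ℕ} (v : Fin k → Bool) (j₀ : Fin k) : ℝ :=
  if v j₀ then ((onesCt v : ℝ))⁻¹ else 0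

lemma blockMu_nonneg {p : ℝ} (h0 : 0 ≤ p) (h1 : p ≤ 1) {k : ℕ} (v : Fin k → Bool) :
    0 ≤ blockMu p v := by
  refine Finset.prod_nonneg fun j _ => ?_
  split <;> linarith

lemma blockW_nonneg {k : ℕ} (v : Fin k → Bool) (j₀ : Fin k) : 0 ≤ blockW v j₀ := by
  unfold blockW; split
  · positivity
  · exact le_refl 0

lemma mupB_eq (p : ℝ) {k n : ℕ} (x : Fin n → Fin k → Bool) :
    mupB p x = ∏ i, blockMu p (x i) := rfl

lemma sum_blockMu {p : ℝ} {k : ℕ} : ∑ v : Fin k → Bool, blockMu p v = 1 := by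
  have h := Finset.prod_univ_sum (fun _ : Fin k => (univ : Finset Bool))
    (fun _ b => if b then p else 1 - p)
  rw [Fintype.piFinset_univ] at h
  have : ∑ v : Fin k → Bool, blockMu p v
      = ∏ _i : Fin k, ∑ b : Bool, (if b then p else 1 - p) := h.symm
  rw [this]
  simp

lemma blockMu_false {p : ℝ} {k : ℕ} :
    blockMu p (fun _ : Fin k => false) = (1 - p) ^ k := by
  simp [blockMu]

lemma onesCt_eq_zero_iff {k : ℕ} (v : Fin k → Bool) :
    onesCt v = 0 ↔ v = fun _ => false := by
  unfold onesCt
  rw [Finset.card_eq_zero, Finset.filter_eq_empty_iff]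
  constructor
  · intro h; funext j; simpa using h (Finset.mem_univ j)
  · intro h j _; simp [h]

lemma sum_blockW {k : ℕ} (v : Fin k → Bool) :
    ∑ j₀ : Fin k, blockW v j₀ = if onesCt v = 0 then 0 else 1 := by
  unfold blockW
  rw [← Finset.sum_filter]
  rw [Finset.sum_const]
  show (onesCt v) • ((onesCt v : ℝ))⁻¹ = _
  rcases eq_or_ne (onesCt v) 0 with h | h
  · simp [h]
  · rw [if_neg h, nsmul_eq_mul, mul_inv_cancel₀ (by exact_mod_cast h)]

lemma blockMu_comp_equiv {p : ℝ} {k : ℕ} (v : Fin k → Bool) (e : Fin k ≃ Fin k) :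
    blockMu p (v ∘ e) = blockMu p v := by
  unfold blockMu
  exact Equiv.prod_comp e (fun j => if v j then p else 1 - p)

lemma onesCt_comp_equiv {k : ℕ} (v : Fin k → Bool) (e : Fin k ≃ Fin k) :
    onesCt (v ∘ e) = onesCt v := by
  unfold onesCt
  apply Finset.card_bij (fun j _ => e j)
  · intro a ha; simp only [Finset.mem_filter, Finset.mem_univ, true_and] at ha ⊢
    exact ha
  · intro a _ b _ hab; exact e.injective hab
  · intro b hb; refine ⟨e.symm b, ?_, by simp⟩
    simp only [Finset.mem_filter, Finset.mem_univ, true_and, Function.comp] at hb ⊢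
    simpa using hb

/-- The single-block key computation. -/
lemma blockSum {p : ℝ} {k : ℕ} (j₀ : Fin k) :
    ∑ v : Fin k → Bool, blockMu p v * blockW v j₀ = (1 - (1 - p) ^ k) / k := by
  have hsym : ∀ j₁ : Fin k,
      ∑ v : Fin k → Bool, blockMu p v * blockW v j₁
        = ∑ v : Fin k → Bool, blockMu p v * blockW v j₀ := by
    intro j₁
    have e : (Fin k → Bool) ≃ (Fin k → Bool) :=
      Equiv.arrowCongr (Equiv.swap j₀ j₁) (Equiv.refl Bool)
    calc ∑ v : Fin k → Bool, blockMu p v * blockW v j₁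
        = ∑ v : Fin k → Bool, blockMu p (v ∘ Equiv.swap j₀ j₁) * blockW (v ∘ Equiv.swap j₀ j₁) j₁ := by
          refine (Equiv.sum_comp (Equiv.arrowCongr (Equiv.swap j₀ j₁) (Equiv.refl Bool))
            (fun v => blockMu p v * blockW v j₁)).symm.trans ?_
          apply Finset.sum_congr rfl
          intro v _
          congr 1
      _ = ∑ v : Fin k → Bool, blockMu p v * blockW v j₀ := by
          apply Finset.sum_congr rfl
          intro v _
          rw [blockMu_comp_equiv]
          congr 1
          unfold blockW
          rw [onesCt_comp_equiv]
          have : (v ∘ Equiv.swap j₀ j₁) j₁ = v j₀ := by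
            simp [Equiv.swap_apply_right]
          rw [this]
  have htot : ∑ j₁ : Fin k, ∑ v : Fin k → Bool, blockMu p v * blockW v j₁
      = 1 - (1 - p) ^ k := by
    rw [Finset.sum_comm]
    have : ∀ v : Fin k → Bool,
        ∑ j₁ : Fin k, blockMu p v * blockW v j₁
          = blockMu p v - (if v = (fun _ => false) then blockMu p v else 0) := by
      intro v
      rw [← Finset.mul_sum, sum_blockW]
      rcases eq_or_ne (onesCt v) 0 with h | h
      · rw [if_pos h, if_pos ((onesCt_eq_zero_iff v).mp h)]; ring
      · rw [if_neg h, if_neg (fun hv => h ((onesCt_eq_zero_iff v).mpr hv))]; ring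
    rw [Finset.sum_congr rfl (fun v _ => this v), Finset.sum_sub_distrib, sum_blockMu,
      Finset.sum_ite_eq' univ (fun _ => false) (fun v => blockMu p v)]
    simp [blockMu_false]
  have hconst : ∑ j₁ : Fin k, ∑ v : Fin k → Bool, blockMu p v * blockW v j₁
      = k * ∑ v : Fin k → Bool, blockMu p v * blockW v j₀ := by
    rw [Finset.sum_congr rfl (fun j₁ _ => hsym j₁), Finset.sum_const, Finset.card_univ,
      Fintype.card_fin, nsmul_eq_mul]
  have hk : (0:ℝ) < k := by
    have := j₀.pos
    exact_mod_cast this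
  field_simp
  rw [← htot, hconst]
  ring

/-- Full product over `n` blocks. -/
lemma fullSum {p : ℝ} {k n : ℕ} (z : Fin n → Fin k) :
    ∑ x : Fin n → Fin k → Bool, mupB p x * ∏ i, blockW (x i) (z i)
      = ((1 - (1 - p) ^ k) / k) ^ n := by
  have h := Finset.prod_univ_sum (fun _ : Fin n => (univ : Finset (Fin k → Bool)))
    (fun i v => blockMu p v * blockW v (z i))
  rw [Fintype.piFinset_univ] at h
  calc ∑ x : Fin n → Fin k → Bool, mupB p x * ∏ i, blockW (x i) (z i)
      = ∑ x : Fin n → Fin k → Bool, ∏ i, (blockMu p (x i) * blockW (x i) (z i)) := by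
        apply Finset.sum_congr rfl; intro x _
        rw [mupB_eq, ← Finset.prod_mul_distrib]
    _ = ∏ i : Fin n, ∑ v : Fin k → Bool, blockMu p v * blockW v (z i) := h.symm
    _ = ((1 - (1 - p) ^ k) / k) ^ n := by
        rw [Finset.prod_congr rfl (fun i _ => blockSum (z i))]
        simp [div_pow]

/-- Total selector weight is at most 1. -/
lemma sumW_le_one {k n : ℕ} (x : Fin n → Fin k → Bool) :
    ∑ z : Fin n → Fin k, ∏ i, blockW (x i) (z i) ≤ 1 := by
  have h := Finset.prod_univ_sum (fun _ : Fin n => (univ : Finset (Fin k)))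
    (fun i j => blockW (x i) j)
  rw [Fintype.piFinset_univ] at h
  rw [← h]
  apply Finset.prod_le_one
  · intro i _
    rw [sum_blockW]
    split <;> norm_num
  · intro i _
    rw [sum_blockW]
    split <;> norm_num

lemma exp_four_thirds_le : Real.exp (4/3) ≤ 4 := by
  have hcube : Real.exp (4/3) ^ 3 = Real.exp 1 ^ 4 := by
    rw [← Real.exp_nat_mul, ← Real.exp_nat_mul]; norm_num
  have h4 : Real.exp 1 ^ 4 < 2.7182818286 ^ 4 :=
    pow_lt_pow_left₀ Real.exp_one_lt_d9 (Real.exp_pos 1).le (by norm_num)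
  have h64 : Real.exp (4/3) ^ 3 < 64 := by
    rw [hcube]; nlinarith [h4]
  nlinarith [Real.exp_pos (4/3 : ℝ), h64, sq_nonneg (Real.exp (4/3) - 4),
    sq_nonneg (Real.exp (4/3) + 4)]

lemma one_sub_inv_pow_ge (n : ℕ) (hn : 2 ≤ n) : (1:ℝ)/4 ≤ (1 - 1/(n:ℝ)) ^ n := by
  rcases lt_or_ge n 4 with h4 | h4
  · interval_cases n
    · norm_num
    · norm_num
  · have hn0 : (0:ℝ) < (n:ℝ) := by positivity
    have hn4 : (4:ℝ) ≤ (n:ℝ) := by exact_mod_cast h4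
    have hn1 : (1:ℝ) ≤ (n:ℝ) - 1 := by linarith
    set u : ℝ := 1/((n:ℝ)-1) with hu
    have hu0 : 0 < u := by positivity
    have h1 : 1 + u ≤ Real.exp u := by linarith [Real.add_one_le_exp u]
    have h2 : Real.exp (-u) ≤ 1 - 1/(n:ℝ) := by
      rw [Real.exp_neg]
      have hx : (1 - 1/(n:ℝ))⁻¹ = 1 + u := by
        rw [hu]; field_simp; ring
      rw [← inv_inv (1 - 1/(n:ℝ)), hx]
      apply inv_anti₀ (by linarith) h1
    have h3 : Real.exp (-u) ^ n ≤ (1 - 1/(n:ℝ)) ^ n :=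
      pow_le_pow_left₀ (Real.exp_pos _).le h2 n
    have h4' : Real.exp (↑n * (-u)) = Real.exp (-u) ^ n := Real.exp_nat_mul _ n
    have h5 : -(4/3 : ℝ) ≤ (n:ℝ) * (-u) := by
      rw [hu]
      have : (n:ℝ) * -(1/((n:ℝ)-1)) = -((n:ℝ)/((n:ℝ)-1)) := by ring
      rw [this, neg_le_neg_iff, div_le_iff₀ (by linarith : (0:ℝ) < (n:ℝ) - 1)]
      linarith
    have h6 : Real.exp (-(4/3:ℝ)) ≤ Real.exp ((n:ℝ) * (-u)) := Real.exp_le_exp.mpr h5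
    have h7 : (1:ℝ)/4 ≤ Real.exp (-(4/3:ℝ)) := by
      rw [Real.exp_neg, one_div]
      exact inv_anti₀ (Real.exp_pos _) exp_four_thirds_le
    calc (1:ℝ)/4 ≤ Real.exp (-(4/3:ℝ)) := h7
      _ ≤ Real.exp ((n:ℝ) * (-u)) := h6
      _ = Real.exp (-u) ^ n := h4'
      _ ≤ (1 - 1/(n:ℝ)) ^ n := h3


lemma mupB_nonneg {p : ℝ} (h0 : 0 ≤ p) (h1 : p ≤ 1) {k n : ℕ} (x : Fin n → Fin k → Bool) :
    0 ≤ mupB p x := by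
  rw [mupB_eq]
  exact Finset.prod_nonneg fun i _ => blockMu_nonneg h0 h1 _

/-- For `k, n ≥ 2` and `p = log n / k ≤ 1`: `(1 - (1-p)^k)^n ≥ 1/4`, and consequently
`|𝒜|/k^n ≤ 4 μ_p(ℬ)` for every `𝒜 ⊆ [k]^n` with up-closed embedding `ℬ`. -/
theorem embedding_measure_bound_four (k n : ℕ) (hk : 2 ≤ k) (hn : 2 ≤ n)
    (hp1 : Real.log n / k ≤ 1) :
    (1 : ℝ) / 4 ≤ (1 - (1 - Real.log n / k) ^ k) ^ n ∧
    ∀ A : Finset (Fin n → Fin k),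
      (A.card : ℝ) / k ^ n ≤ 4 * muSet (Real.log n / k) (upClosure (tildeEmb A)) := by
  classical
  set p := Real.log n / k with hpdef
  have hkpos : (0:ℝ) < k := by
    have : (0:ℕ) < k := by omega
    exact_mod_cast this
  have hnpos : (0:ℝ) < n := by
    have : (0:ℕ) < n := by omega
    exact_mod_cast this
  have hn1 : (1:ℝ) ≤ (n:ℝ) := by
    have : (1:ℕ) ≤ n := by omega
    exact_mod_cast this
  have hp0 : 0 ≤ p := div_nonneg (Real.log_nonneg hn1) hkpos.le
  have hq0 : (0:ℝ) ≤ 1 - p := by linarith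
  have h1 : (1 - p) ^ k ≤ 1 / (n:ℝ) := by
    have he : 1 - p ≤ Real.exp (-p) := by linarith [Real.add_one_le_exp (-p)]
    have h2 : (1 - p) ^ k ≤ Real.exp (-p) ^ k := pow_le_pow_left₀ hq0 he k
    have h3 : Real.exp (-p) ^ k = Real.exp ((k:ℝ) * (-p)) := (Real.exp_nat_mul _ _).symm
    have h4 : (k:ℝ) * (-p) = - Real.log n := by
      rw [hpdef]; field_simp
    have h5 : Real.exp (-Real.log (n:ℝ)) = 1 / (n:ℝ) := by
      rw [Real.exp_neg, Real.exp_log hnpos, one_div]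
    rw [h3, h4, h5] at h2
    exact h2
  have hbase : 1 - 1/(n:ℝ) ≤ 1 - (1 - p) ^ k := by linarith
  have hbase0 : (0:ℝ) ≤ 1 - 1/(n:ℝ) := by
    have : 1/(n:ℝ) ≤ 1 := by
      rw [div_le_one hnpos]; exact hn1
    linarith
  have part1 : (1:ℝ)/4 ≤ (1 - (1 - p) ^ k) ^ n :=
    le_trans (one_sub_inv_pow_ge n hn) (pow_le_pow_left₀ hbase0 hbase n)
  refine ⟨part1, ?_⟩
  intro A
  set B := upClosure (tildeEmb A) with hB
  have key : (A.card : ℝ) * ((1 - (1 - p) ^ k) / k) ^ n ≤ muSet p B := by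
    have hsum : ∑ z ∈ A, ∑ x : Fin n → Fin k → Bool, mupB p x * ∏ i, blockW (x i) (z i)
        = (A.card : ℝ) * ((1 - (1 - p) ^ k) / k) ^ n := by
      rw [Finset.sum_congr rfl (fun z _ => fullSum z), Finset.sum_const, nsmul_eq_mul]
    rw [← hsum, Finset.sum_comm]
    unfold muSet
    apply Finset.sum_le_sum
    intro x _
    rw [← Finset.mul_sum]
    by_cases hxB : x ∈ B
    · rw [if_pos hxB]
      apply mul_le_of_le_one_right (mupB_nonneg hp0 hp1 x)
      refine le_trans ?_ (sumW_le_one x)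
      apply Finset.sum_le_sum_of_subset_of_nonneg (Finset.subset_univ A)
      intro z _ _
      exact Finset.prod_nonneg fun i _ => blockW_nonneg _ _
    · rw [if_neg hxB]
      have hz0 : ∑ z ∈ A, ∏ i, blockW (x i) (z i) = 0 := by
        apply Finset.sum_eq_zero
        intro z hz
        by_contra h0
        have hall : ∀ i, x i (z i) = true := by
          intro i
          by_contra hne
          apply h0
          apply Finset.prod_eq_zero (Finset.mem_univ i)
          unfold blockW
          rw [if_neg]
          simpa using hne
        apply hxB
        refine ⟨fun i j => decide (j = z i), ⟨z, hz, fun i j => rfl⟩, ?_⟩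
        intro i j hij
        have hj : j = z i := of_decide_eq_true hij
        subst hj
        exact hall i
      rw [hz0, mul_zero]
  have hk2 : ((1 - (1 - p) ^ k) / (k:ℝ)) ^ n = (1 - (1 - p) ^ k) ^ n / (k:ℝ) ^ n :=
    div_pow _ _ n
  have hkn : (0:ℝ) < (k:ℝ) ^ n := by positivity
  have hA0 : (0:ℝ) ≤ (A.card : ℝ) / (k:ℝ) ^ n := by positivity
  have h14 : (A.card : ℝ) / (k:ℝ) ^ n * (1/4) ≤ (A.card : ℝ) / (k:ℝ) ^ n * ((1 - (1 - p) ^ k) ^ n) :=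
    mul_le_mul_of_nonneg_left part1 hA0
  have heq : (A.card : ℝ) / (k:ℝ) ^ n * ((1 - (1 - p) ^ k) ^ n)
      = (A.card : ℝ) * ((1 - (1 - p) ^ k) / (k:ℝ)) ^ n := by
    rw [hk2]; ring
  rw [heq] at h14
  linarith
end
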